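/- If a quasi-copula Q on [0,1]² satisfies α_Q = 1, where α_Q = sup_{n≥1} max{ max_i 2ⁿ Σ_{j=1}^{2ⁿ} V_Q(R_{ij}ⁿ)⁺ , max_j 2ⁿ Σ_{i=1}^{2ⁿ} V_Q(R_{ij}ⁿ)⁺ } with R_{ij}ⁿ = [(i−1)/2ⁿ, i/2ⁿ]×[(j−1)/2ⁿ, j/2ⁿ], then Q is a copula. -/

import Mathlib

open Set

/-- A bivariate copula (conditions imposed on the unit square). -/
def IsCopula (C : ℝ → ℝ → ℝ) : Prop :=
  (∀ x ∈ Icc (0:ℝ) 1, C x 0 = 0 ∧ C 0 x = 0 ∧ C x 1 = x ∧ C 1 x = x) ∧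
  (∀ x₁ ∈ Icc (0:ℝ) 1, ∀ x₂ ∈ Icc (0:ℝ) 1, ∀ y₁ ∈ Icc (0:ℝ) 1, ∀ y₂ ∈ Icc (0:ℝ) 1,
    x₁ ≤ x₂ → y₁ ≤ y₂ → 0 ≤ C x₂ y₂ - C x₁ y₂ - C x₂ y₁ + C x₁ y₁)

/-- A bivariate quasi-copula (conditions imposed on the unit square). -/
def IsQuasiCopula (Q : ℝ → ℝ → ℝ) : Prop :=
  (∀ x ∈ Icc (0:ℝ) 1, Q x 0 = 0 ∧ Q 0 x = 0 ∧ Q x 1 = x ∧ Q 1 x = x) ∧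
  (∀ x₁ ∈ Icc (0:ℝ) 1, ∀ x₂ ∈ Icc (0:ℝ) 1, ∀ y ∈ Icc (0:ℝ) 1,
    x₁ ≤ x₂ → Q x₁ y ≤ Q x₂ y) ∧
  (∀ x ∈ Icc (0:ℝ) 1, ∀ y₁ ∈ Icc (0:ℝ) 1, ∀ y₂ ∈ Icc (0:ℝ) 1,
    y₁ ≤ y₂ → Q x y₁ ≤ Q x y₂) ∧
  (∀ x₁ ∈ Icc (0:ℝ) 1, ∀ x₂ ∈ Icc (0:ℝ) 1, ∀ y₁ ∈ Icc (0:ℝ) 1, ∀ y₂ ∈ Icc (0:ℝ) 1,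
    |Q x₂ y₂ - Q x₁ y₁| ≤ |x₂ - x₁| + |y₂ - y₁|)

/-- Q-volume of the dyadic rectangle R_{ij}^n = [i/2^n,(i+1)/2^n] × [j/2^n,(j+1)/2^n]
(indices shifted by one with respect to the paper). -/
noncomputable def dyadVol (Q : ℝ → ℝ → ℝ) (n : ℕ) (i j : Fin (2^n)) : ℝ :=
  Q (((i : ℕ) + 1) / 2^n) (((j : ℕ) + 1) / 2^n)
    - Q ((i : ℕ) / 2^n) (((j : ℕ) + 1) / 2^n)
    - Q (((i : ℕ) + 1) / 2^n) ((j : ℕ) / 2^n)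
    + Q ((i : ℕ) / 2^n) ((j : ℕ) / 2^n)

/-- The set of all row/column sums of positive parts of dyadic volumes, normalized by
strip width; α_Q is its supremum. -/
noncomputable def alphaSet (Q : ℝ → ℝ → ℝ) : Set ℝ :=
  {r | ∃ n : ℕ, 1 ≤ n ∧
    ((∃ i : Fin (2^n), r = 2^n * ∑ j : Fin (2^n), max (dyadVol Q n i j) 0) ∨
     (∃ j : Fin (2^n), r = 2^n * ∑ i : Fin (2^n), max (dyadVol Q n i j) 0))}

lemma mem_grid {n k : ℕ} (hk : k ≤ 2^n) : ((k:ℝ)/2^n) ∈ Icc (0:ℝ) 1 := by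
  constructor
  · positivity
  · rw [div_le_one (by positivity)]
    exact_mod_cast hk

lemma tele (f : ℕ → ℝ) {c d : ℕ} (h : c ≤ d) :
    ∑ j ∈ Finset.Ico c d, (f (j+1) - f j) = f d - f c := by
  rw [Finset.sum_Ico_eq_sub _ h, Finset.sum_range_sub, Finset.sum_range_sub]; ring

lemma cell_nonneg (Q : ℝ → ℝ → ℝ) (hQ : IsQuasiCopula Q)
    (halpha : IsLUB (alphaSet Q) 1) {n : ℕ} (hn : 1 ≤ n) (i j : Fin (2^n)) :
    0 ≤ dyadVol Q n i j := by
  have h2 : (0:ℝ) < 2^n := by positivity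
  have hle : (2^n : ℝ) * ∑ j : Fin (2^n), max (dyadVol Q n i j) 0 ≤ 1 :=
    halpha.1 ⟨n, hn, Or.inl ⟨i, rfl⟩⟩
  have hi1 : ((i:ℕ) : ℝ)/2^n ∈ Icc (0:ℝ) 1 := mem_grid i.2.le
  have hi2 : (((i:ℕ):ℝ) + 1)/2^n ∈ Icc (0:ℝ) 1 := by
    have := mem_grid (n := n) (k := (i:ℕ)+1) i.2
    push_cast at this; exact this
  -- sum of volumes over a row equals 1/2^n
  have hsum : ∑ j : Fin (2^n), dyadVol Q n i j = 1/2^n := by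
    have key : ∀ k : ℕ, dyadVol Q n i = fun j : Fin (2^n) =>
        ((fun m : ℕ => Q ((((i:ℕ):ℝ)+1)/2^n) ((m:ℝ)/2^n) - Q (((i:ℕ):ℝ)/2^n) ((m:ℝ)/2^n)) ((j:ℕ)+1)
        - (fun m : ℕ => Q ((((i:ℕ):ℝ)+1)/2^n) ((m:ℝ)/2^n) - Q (((i:ℕ):ℝ)/2^n) ((m:ℝ)/2^n)) (j:ℕ)) := by
      intro _; funext j; simp only [dyadVol]; push_cast; ring
    rw [key 0]
    set f : ℕ → ℝ := fun m => Q ((((i:ℕ):ℝ)+1)/2^n) ((m:ℝ)/2^n) - Q (((i:ℕ):ℝ)/2^n) ((m:ℝ)/2^n) with hf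
    have : ∑ j : Fin (2^n), (f ((j:ℕ)+1) - f (j:ℕ)) = ∑ m ∈ Finset.range (2^n), (f (m+1) - f m) :=
      Fin.sum_univ_eq_sum_range (fun m => f (m+1) - f m) (2^n)
    rw [this, Finset.sum_range_sub]
    have e1 : f (2^n) = 1/2^n := by
      have h1 : ((2^n : ℕ) : ℝ)/2^n = 1 := by
        rw [div_eq_one_iff_eq (ne_of_gt h2)]; push_cast; ring
      rw [hf]; simp only [h1]
      rw [(hQ.1 _ hi2).2.2.1, (hQ.1 _ hi1).2.2.1]
      field_simp
      ring
    have e0 : f 0 = 0 := by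
      rw [hf]; simp only [Nat.cast_zero, zero_div]
      rw [(hQ.1 _ hi2).1, (hQ.1 _ hi1).1]; ring
    rw [e1, e0]; ring
  have hmax : ∑ j : Fin (2^n), max (dyadVol Q n i j) 0 ≤ 1/2^n := by
    rw [le_div_iff₀ h2]
    nlinarith [hle]
  have hdiff : ∑ j : Fin (2^n), (max (dyadVol Q n i j) 0 - dyadVol Q n i j) ≤ 0 := by
    rw [Finset.sum_sub_distrib, hsum]; linarith
  have hz : ∀ j' ∈ Finset.univ, max (dyadVol Q n i j') 0 - dyadVol Q n i j' = 0 := by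
    rw [← Finset.sum_eq_zero_iff_of_nonneg (fun j' _ => by
      simp [sub_nonneg, le_max_left])]
    have : 0 ≤ ∑ j' : Fin (2^n), (max (dyadVol Q n i j') 0 - dyadVol Q n i j') :=
      Finset.sum_nonneg (fun j' _ => by simp [sub_nonneg, le_max_left])
    linarith
  have := hz j (Finset.mem_univ j)
  have : dyadVol Q n i j = max (dyadVol Q n i j) 0 := by linarith
  rw [this]; exact le_max_right _ _

lemma grid_nonneg (Q : ℝ → ℝ → ℝ) (hQ : IsQuasiCopula Q)
    (halpha : IsLUB (alphaSet Q) 1) {n a b c d : ℕ} (hn : 1 ≤ n)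
    (hab : a ≤ b) (hb : b ≤ 2^n) (hcd : c ≤ d) (hd : d ≤ 2^n) :
    0 ≤ Q ((b:ℝ)/2^n) ((d:ℝ)/2^n) - Q ((a:ℝ)/2^n) ((d:ℝ)/2^n)
        - Q ((b:ℝ)/2^n) ((c:ℝ)/2^n) + Q ((a:ℝ)/2^n) ((c:ℝ)/2^n) := by
  set g : ℕ → ℕ → ℝ := fun i j => Q ((i:ℝ)/2^n) ((j:ℝ)/2^n) with hg
  have key : ∑ i ∈ Finset.Ico a b, ∑ j ∈ Finset.Ico c d,
      (g (i+1) (j+1) - g i (j+1) - g (i+1) j + g i j)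
      = g b d - g a d - g b c + g a c := by
    have inner : ∀ i, ∑ j ∈ Finset.Ico c d,
        (g (i+1) (j+1) - g i (j+1) - g (i+1) j + g i j)
        = (g (i+1) d - g i d) - (g (i+1) c - g i c) := by
      intro i
      have := tele (fun j => g (i+1) j - g i j) hcd
      rw [← this]
      apply Finset.sum_congr rfl; intro j _; ring
    calc ∑ i ∈ Finset.Ico a b, ∑ j ∈ Finset.Ico c d,
          (g (i+1) (j+1) - g i (j+1) - g (i+1) j + g i j)
        = ∑ i ∈ Finset.Ico a b, ((fun i => g i d - g i c) (i+1) - (fun i => g i d - g i c) i) := by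
          apply Finset.sum_congr rfl; intro i _; rw [inner i]; ring
      _ = (fun i => g i d - g i c) b - (fun i => g i d - g i c) a :=
          tele (fun i => g i d - g i c) hab
      _ = (g b d - g b c) - (g a d - g a c) := by simp only []
      _ = g b d - g a d - g b c + g a c := by ring
  have pos : 0 ≤ ∑ i ∈ Finset.Ico a b, ∑ j ∈ Finset.Ico c d,
      (g (i+1) (j+1) - g i (j+1) - g (i+1) j + g i j) := by
    apply Finset.sum_nonneg; intro i hi
    apply Finset.sum_nonneg; intro j hj
    have hi' : i < 2^n := lt_of_lt_of_le (Finset.mem_Ico.mp hi).2 hb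
    have hj' : j < 2^n := lt_of_lt_of_le (Finset.mem_Ico.mp hj).2 hd
    have := cell_nonneg Q hQ halpha hn ⟨i, hi'⟩ ⟨j, hj'⟩
    simp only [dyadVol, Fin.val_mk] at this
    simp only [hg]; push_cast; push_cast at this; linarith
  rw [key] at pos
  simpa [hg] using pos

theorem stmt17 (Q : ℝ → ℝ → ℝ) (hQ : IsQuasiCopula Q)
    (halpha : IsLUB (alphaSet Q) 1) :
    IsCopula Q := by
  refine ⟨hQ.1, ?_⟩
  intro x₁ hx₁ x₂ hx₂ y₁ hy₁ y₂ hy₂ hx hy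
  have lip := hQ.2.2.2
  refine le_of_forall_pos_le_add ?_
  intro ε hε
  obtain ⟨n₀, hn₀⟩ := pow_unbounded_of_one_lt (8/ε) (one_lt_two (α := ℝ))
  set n := n₀ + 1 with hn
  have hn1 : 1 ≤ n := Nat.le_add_left 1 n₀
  have h2 : (0:ℝ) < 2^n := by positivity
  have h8 : 8/ε < 2^n := by
    calc 8/ε < 2^n₀ := hn₀
      _ ≤ 2^n := by
        apply pow_le_pow_right₀ (by norm_num)
        omega
  have hεbound : 8/2^n < ε := by
    rw [div_lt_iff₀ h2]
    rw [div_lt_iff₀ hε] at h8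
    nlinarith
  -- floors
  set a := ⌊x₁ * 2^n⌋₊ with ha
  set b := ⌊x₂ * 2^n⌋₊ with hb
  set c := ⌊y₁ * 2^n⌋₊ with hc
  set d := ⌊y₂ * 2^n⌋₊ with hd
  have hfloor : ∀ x : ℝ, x ∈ Icc (0:ℝ) 1 →
      ⌊x * 2^n⌋₊ ≤ 2^n ∧ (⌊x * 2^n⌋₊ : ℝ)/2^n ∈ Icc (0:ℝ) 1 ∧
      |x - (⌊x * 2^n⌋₊ : ℝ)/2^n| ≤ 1/2^n := by
    intro x hxm
    have h0 : 0 ≤ x * 2^n := mul_nonneg hxm.1 h2.le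
    have hle' : (⌊x * 2^n⌋₊ : ℝ) ≤ x * 2^n := Nat.floor_le h0
    have hlt : x * 2^n < ⌊x * 2^n⌋₊ + 1 := Nat.lt_floor_add_one _
    have hle2n : ⌊x * 2^n⌋₊ ≤ 2^n := by
      have : x * 2^n ≤ ((2^n : ℕ) : ℝ) := by
        push_cast
        nlinarith [hxm.2]
      calc ⌊x * 2^n⌋₊ ≤ ⌊((2^n : ℕ) : ℝ)⌋₊ := Nat.floor_le_floor this
        _ = 2^n := Nat.floor_natCast _
    refine ⟨hle2n, mem_grid hle2n, ?_⟩
    have hub : (⌊x * 2^n⌋₊ : ℝ)/2^n ≤ x := by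
      rw [div_le_iff₀ h2]; exact hle'
    have hlb : x < (⌊x * 2^n⌋₊ : ℝ)/2^n + 1/2^n := by
      rw [← add_div, lt_div_iff₀ h2]; linarith
    have hpos : (0:ℝ) < 1/2^n := by positivity
    rw [abs_le]
    constructor <;> linarith
  obtain ⟨hb2, hbm, hbx⟩ := hfloor x₂ hx₂
  obtain ⟨ha2, ham, hax⟩ := hfloor x₁ hx₁
  obtain ⟨hd2, hdm, hdy⟩ := hfloor y₂ hy₂
  obtain ⟨hc2, hcm, hcy⟩ := hfloor y₁ hy₁
  have hab : a ≤ b := Nat.floor_le_floor (by nlinarith)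
  have hcd : c ≤ d := Nat.floor_le_floor (by nlinarith)
  have hgrid := grid_nonneg Q hQ halpha hn1 hab hb2 hcd hd2
  -- corner estimates
  have corner : ∀ x y : ℝ, x ∈ Icc (0:ℝ) 1 → y ∈ Icc (0:ℝ) 1 →
      ∀ u v : ℕ, u ≤ 2^n → v ≤ 2^n → |x - (u:ℝ)/2^n| ≤ 1/2^n → |y - (v:ℝ)/2^n| ≤ 1/2^n →
      |Q x y - Q ((u:ℝ)/2^n) ((v:ℝ)/2^n)| ≤ 2/2^n := by
    intro x y hxm hym u v hu hv hux hvy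
    have := lip ((u:ℝ)/2^n) (mem_grid hu) x hxm ((v:ℝ)/2^n) (mem_grid hv) y hym
    calc |Q x y - Q ((u:ℝ)/2^n) ((v:ℝ)/2^n)| ≤ |x - (u:ℝ)/2^n| + |y - (v:ℝ)/2^n| := this
      _ ≤ 1/2^n + 1/2^n := add_le_add hux hvy
      _ = 2/2^n := by ring
  have c1 := corner x₂ y₂ hx₂ hy₂ b d hb2 hd2 hbx hdy
  have c2 := corner x₁ y₂ hx₁ hy₂ a d ha2 hd2 hax hdy
  have c3 := corner x₂ y₁ hx₂ hy₁ b c hb2 hc2 hbx hcy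
  have c4 := corner x₁ y₁ hx₁ hy₁ a c ha2 hc2 hax hcy
  rw [abs_le] at c1 c2 c3 c4
  have e8 : (8:ℝ)/2^n = 2/2^n + 2/2^n + 2/2^n + 2/2^n := by ring
  linarith [c1.1, c2.2, c3.2, c4.1, hεbound, hgrid, e8]
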